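/- Let f : ℝ^d → ℝ be differentiable with L-Lipschitz gradient (L > 0) and bounded below, with f* := inf f. On a probability space with filtration (F_t)_{t≥0}, let the iterates be x_0 ∈ ℝ^d deterministic and x_{t+1} := x_t − η_t·G_t for t = 0,…,T−1, where each x_t is F_t-measurable, G_t is F_{t+1}-measurable and square-integrable, E[G_t | F_t] = ∇f(x_t) almost surely, E[‖G_t − ∇f(x_t)‖² | F_t] ≤ σ² almost surely, and the deterministic stepsizes satisfy 0 < η_t ≤ 1/L. Then Σ_{t=0}^{T−1} (2η_t − L·η_t²)·E[‖∇f(x_t)‖²] ≤ 2(f(x_0) − f*) + L·σ²·Σ_{t=0}^{T−1} η_t². Consequently, if an output index T* ∈ {0,…,T−1} is drawn independently with P(T* = t) = (2η_t − L·η_t²)/Σ_{s=0}^{T−1}(2η_s − L·η_s²), then E[‖∇f(x_{T*})‖²] ≤ ( 2(f(x_0) − f*) + L·σ²·Σ_t η_t² ) / Σ_t (2η_t − L·η_t²). (Core convergence bound of Theorem 6.5 for the stochastic approximation algorithm in nonconvex settings.) -/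

import Mathlib

open MeasureTheory ProbabilityTheory
open scoped RealInnerProductSpace

lemma descent_lemma {E : Type*} [NormedAddCommGroup E] [InnerProductSpace ℝ E] [CompleteSpace E]
    (f : E → ℝ) (L : ℝ) (hL : 0 ≤ L) (hdiff : Differentiable ℝ f)
    (hlip : LipschitzWith L.toNNReal (fun x => gradient f x)) (x y : E) :
    f y ≤ f x + ⟪gradient f x, y - x⟫ + L / 2 * ‖y - x‖ ^ 2 := by
  set v := y - x with hv
  set φ : ℝ → ℝ := fun t => f (x + t • v) - t * ⟪gradient f x, v⟫ - L / 2 * t ^ 2 * ‖v‖ ^ 2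
    with hφ
  have hline : ∀ t : ℝ, HasDerivAt (fun s : ℝ => x + s • v) v t := by
    intro t
    simpa using ((hasDerivAt_id t).smul_const v).const_add x
  have hd : ∀ t : ℝ, HasDerivAt φ
      (⟪gradient f (x + t • v), v⟫ - ⟪gradient f x, v⟫ - L * t * ‖v‖ ^ 2) t := by
    intro t
    have h1 : HasDerivAt (fun s : ℝ => f (x + s • v)) ⟪gradient f (x + t • v), v⟫ t := by
      have hg := (hdiff (x + t • v)).hasGradientAt
      rw [hasGradientAt_iff_hasFDerivAt] at hg
      have := hg.comp_hasDerivAt t (hline t)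
      exact this
    have h2 : HasDerivAt (fun s : ℝ => s * ⟪gradient f x, v⟫) ⟪gradient f x, v⟫ t := by
      simpa using (hasDerivAt_id t).mul_const ⟪gradient f x, v⟫
    have h3 : HasDerivAt (fun s : ℝ => L / 2 * s ^ 2 * ‖v‖ ^ 2) (L * t * ‖v‖ ^ 2) t := by
      have := ((hasDerivAt_pow 2 t).const_mul (L / 2)).mul_const (‖v‖ ^ 2)
      refine this.congr_deriv ?_
      ring
    exact (h1.sub h2).sub h3
  have hmono : AntitoneOn φ (Set.Icc 0 1) := by
    apply antitoneOn_of_deriv_nonpos (convex_Icc 0 1)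
    · have : Differentiable ℝ φ := fun t => (hd t).differentiableAt
      exact this.continuous.continuousOn
    · intro t ht
      exact (hd t).differentiableAt.differentiableWithinAt
    · intro t ht
      rw [interior_Icc] at ht
      rw [(hd t).deriv]
      have hip : ⟪gradient f (x + t • v) - gradient f x, v⟫ ≤ L * t * ‖v‖ ^ 2 := by
        calc ⟪gradient f (x + t • v) - gradient f x, v⟫
            ≤ ‖gradient f (x + t • v) - gradient f x‖ * ‖v‖ := real_inner_le_norm _ _
          _ ≤ L * t * ‖v‖ ^ 2 := by
              have h1 := hlip.dist_le_mul (x + t • v) x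
              rw [dist_eq_norm, dist_eq_norm, add_sub_cancel_left, norm_smul,
                Real.norm_eq_abs, abs_of_nonneg ht.1.le, Real.coe_toNNReal _ hL] at h1
              calc ‖gradient f (x + t • v) - gradient f x‖ * ‖v‖
                  ≤ L * (t * ‖v‖) * ‖v‖ :=
                    mul_le_mul_of_nonneg_right h1 (norm_nonneg _)
                _ = L * t * ‖v‖ ^ 2 := by ring
      rw [inner_sub_left] at hip
      linarith
  have h01 := hmono (Set.left_mem_Icc.2 zero_le_one) (Set.right_mem_Icc.2 zero_le_one)
    zero_le_one
  have hφ0 : φ 0 = f x := by simp [hφ]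
  have hφ1 : φ 1 = f y - ⟪gradient f x, v⟫ - L / 2 * ‖v‖ ^ 2 := by
    simp [hφ, hv]
  rw [hφ0, hφ1] at h01
  linarith

lemma condexp_clm_comm {α E F : Type*} {m m0 : MeasurableSpace α} {μ : Measure α}
    [NormedAddCommGroup E] [NormedSpace ℝ E] [CompleteSpace E]
    [NormedAddCommGroup F] [NormedSpace ℝ F] [CompleteSpace F]
    (hm : m ≤ m0) [IsFiniteMeasure μ] (T : E →L[ℝ] F) {G : α → E}
    (hG : Integrable G μ) :
    (μ[fun ω => T (G ω)|m]) =ᵐ[μ] fun ω => T ((μ[G|m]) ω) := by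
  have hTG : Integrable (fun ω => T (G ω)) μ := T.integrable_comp hG
  refine (ae_eq_condExp_of_forall_setIntegral_eq hm hTG
    (fun s _ _ => (T.integrable_comp integrable_condExp).integrableOn)
    (fun s hs hμs => ?_) ?_).symm
  · rw [T.integral_comp_comm integrable_condExp.integrableOn,
      setIntegral_condExp hm hG hs, T.integral_comp_comm hG.integrableOn]
  · exact (T.continuous.comp_stronglyMeasurable
      (stronglyMeasurable_condExp (m := m))).aestronglyMeasurable

set_option maxHeartbeats 2000000 in
theorem stmt_16
    {d : ℕ}
    (f : EuclideanSpace ℝ (Fin d) → ℝ)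
    (L : ℝ) (hL : 0 < L)
    (hdiff : Differentiable ℝ f)
    (hlip : LipschitzWith L.toNNReal (fun x => gradient f x))
    (hbdd : BddBelow (Set.range f))
    (fstar : ℝ) (hfstar : fstar = sInf (Set.range f))
    {Ω₀ : Type*} [m : MeasurableSpace Ω₀]
    (Pr : Measure Ω₀) [IsProbabilityMeasure Pr]
    (ℱ : ℕ → MeasurableSpace Ω₀) (hmono : Monotone ℱ) (hle : ∀ t, ℱ t ≤ m)
    (T : ℕ) (hT : 0 < T)
    (η : ℕ → ℝ) (hη : ∀ t, 0 < η t ∧ η t ≤ 1 / L)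
    (x0 : EuclideanSpace ℝ (Fin d))
    (x : ℕ → Ω₀ → EuclideanSpace ℝ (Fin d))
    (Gs : ℕ → Ω₀ → EuclideanSpace ℝ (Fin d))
    (hx0 : ∀ ω, x 0 ω = x0)
    (hiter : ∀ t ω, x (t + 1) ω = x t ω - η t • Gs t ω)
    (hxmeas : ∀ t, StronglyMeasurable[ℱ t] (x t))
    (hGmeas : ∀ t, StronglyMeasurable[ℱ (t + 1)] (Gs t))
    (hGsq : ∀ t, Integrable (fun ω => ‖Gs t ω‖ ^ 2) Pr)
    (hunbiased : ∀ t, (Pr[Gs t|ℱ t]) =ᵐ[Pr] fun ω => gradient f (x t ω))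
    (σ : ℝ) (hσ : 0 ≤ σ)
    (hvar : ∀ t, ∀ᵐ ω ∂Pr,
      (Pr[fun ω' => ‖Gs t ω' - gradient f (x t ω')‖ ^ 2|ℱ t]) ω ≤ σ ^ 2) :
    (∑ t ∈ Finset.range T,
        (2 * η t - L * η t ^ 2) * ∫ ω, ‖gradient f (x t ω)‖ ^ 2 ∂Pr)
      ≤ 2 * (f x0 - fstar) + L * σ ^ 2 * ∑ t ∈ Finset.range T, η t ^ 2
    ∧ ∀ Tstar : Ω₀ → ℕ, Measurable Tstar →
        IndepFun Tstar (fun ω => fun t => x t ω) Pr →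
        (∀ t : ℕ, Pr {ω | Tstar ω = t} =
          ENNReal.ofReal (if t < T then
            (2 * η t - L * η t ^ 2) /
              (∑ s ∈ Finset.range T, (2 * η s - L * η s ^ 2))
          else 0)) →
        (∫ ω, ‖gradient f (x (Tstar ω) ω)‖ ^ 2 ∂Pr) ≤
          (2 * (f x0 - fstar) + L * σ ^ 2 * ∑ t ∈ Finset.range T, η t ^ 2) /
            (∑ t ∈ Finset.range T, (2 * η t - L * η t ^ 2)) := by
  -- basic facts
  have hgc : Continuous (fun p => gradient f p) := hlip.continuous
  have hfc : Continuous f := hdiff.continuous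
  have hfstar_le : ∀ p, fstar ≤ f p := by
    intro p; rw [hfstar]; exact csInf_le hbdd (Set.mem_range_self p)
  -- measurability
  have hxm : ∀ t, AEStronglyMeasurable (x t) Pr :=
    fun t => ((hxmeas t).mono (hle t)).aestronglyMeasurable
  have hGm : ∀ t, AEStronglyMeasurable (Gs t) Pr :=
    fun t => ((hGmeas t).mono (hle (t+1))).aestronglyMeasurable
  have hgradm : ∀ t, AEStronglyMeasurable (fun ω => gradient f (x t ω)) Pr :=
    fun t => hgc.comp_aestronglyMeasurable (hxm t)
  -- integrability
  have hxsq : ∀ t, Integrable (fun ω => ‖x t ω‖ ^ 2) Pr := by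
    intro t
    induction t with
    | zero => simp only [hx0]; exact integrable_const _
    | succ t ih =>
      have hmeas : AEStronglyMeasurable (fun ω => ‖x (t+1) ω‖ ^ 2) Pr :=
        (continuous_pow 2).comp_aestronglyMeasurable (hxm (t+1)).norm
      refine Integrable.mono' ((ih.const_mul 2).add ((hGsq t).const_mul (2 * (η t) ^ 2)))
        hmeas (Filter.Eventually.of_forall fun ω => ?_)
      simp only [Pi.add_apply]
      rw [Real.norm_eq_abs, abs_of_nonneg (by positivity), hiter t ω]
      have h1 : ‖x t ω - η t • Gs t ω‖ ≤ ‖x t ω‖ + |η t| * ‖Gs t ω‖ := by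
        refine (norm_sub_le _ _).trans ?_
        rw [norm_smul, Real.norm_eq_abs]
      have h5 : |η t| ^ 2 = η t ^ 2 := sq_abs _
      nlinarith [norm_nonneg (x t ω), norm_nonneg (Gs t ω),
        norm_nonneg (x t ω - η t • Gs t ω), abs_nonneg (η t),
        mul_nonneg (abs_nonneg (η t)) (norm_nonneg (Gs t ω)),
        sq_nonneg (‖x t ω‖ - |η t| * ‖Gs t ω‖)]
  have hgradsq : ∀ t, Integrable (fun ω => ‖gradient f (x t ω)‖ ^ 2) Pr := by
    intro t
    have hmeas : AEStronglyMeasurable (fun ω => ‖gradient f (x t ω)‖ ^ 2) Pr :=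
      (continuous_pow 2).comp_aestronglyMeasurable (hgradm t).norm
    refine Integrable.mono'
      (((((hxsq t).add (integrable_const (‖x0‖^2))).const_mul (4 * L ^ 2)).add
        (integrable_const (2 * ‖gradient f x0‖ ^ 2))))
      hmeas (Filter.Eventually.of_forall fun ω => ?_)
    simp only [Pi.add_apply]
    rw [Real.norm_eq_abs, abs_of_nonneg (by positivity)]
    have h1 := hlip.dist_le_mul (x t ω) x0
    rw [dist_eq_norm, dist_eq_norm, Real.coe_toNNReal _ hL.le] at h1
    have h2 : ‖gradient f (x t ω)‖ ≤ ‖gradient f x0‖ + L * ‖x t ω - x0‖ := by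
      have := norm_sub_norm_le (gradient f (x t ω)) (gradient f x0)
      linarith
    have h3 : ‖x t ω - x0‖ ≤ ‖x t ω‖ + ‖x0‖ := norm_sub_le _ _
    nlinarith [norm_nonneg (gradient f (x t ω)), norm_nonneg (gradient f x0),
      norm_nonneg (x t ω - x0), norm_nonneg (x t ω), norm_nonneg x0, hL.le,
      sq_nonneg (‖gradient f x0‖ - L * ‖x t ω - x0‖), sq_nonneg (‖x t ω‖ - ‖x0‖),
      mul_le_mul_of_nonneg_left h3 (mul_pos hL hL).le,
      mul_self_nonneg (L * (‖x t ω‖ + ‖x0‖))]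
  -- L¹ of vector-valued functions via x ≤ 1 + x²
  have sqint_to_int : ∀ (g : Ω₀ → EuclideanSpace ℝ (Fin d)),
      AEStronglyMeasurable g Pr → Integrable (fun ω => ‖g ω‖ ^ 2) Pr →
      Integrable g Pr := by
    intro g hgm hg2
    refine Integrable.mono' ((integrable_const (1:ℝ)).add hg2) hgm
      (Filter.Eventually.of_forall fun ω => ?_)
    simp only [Pi.add_apply]
    nlinarith [norm_nonneg (g ω), sq_nonneg (‖g ω‖ - 1)]
  have hGL1 : ∀ t, Integrable (Gs t) Pr := fun t => sqint_to_int _ (hGm t) (hGsq t)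
  have hgradL1 : ∀ t, Integrable (fun ω => gradient f (x t ω)) Pr :=
    fun t => sqint_to_int _ (hgradm t) (hgradsq t)
  -- inner products integrable
  have hinner_int : ∀ t, Integrable (fun ω => ⟪gradient f (x t ω), Gs t ω⟫) Pr := by
    intro t
    refine Integrable.mono' ((hgradsq t).add (hGsq t))
      ((hgradm t).inner (hGm t)) (Filter.Eventually.of_forall fun ω => ?_)
    simp only [Pi.add_apply]
    have h1 := abs_real_inner_le_norm (gradient f (x t ω)) (Gs t ω)
    have := norm_nonneg (gradient f (x t ω)); have := norm_nonneg (Gs t ω)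
    rw [Real.norm_eq_abs]
    nlinarith [sq_nonneg (‖gradient f (x t ω)‖ - ‖Gs t ω‖)]
  have hdiffsq_int : ∀ t,
      Integrable (fun ω => ‖Gs t ω - gradient f (x t ω)‖ ^ 2) Pr := by
    intro t
    refine Integrable.mono' (((hGsq t).add (hgradsq t)).const_mul 2)
      ((continuous_pow 2).comp_aestronglyMeasurable ((hGm t).sub (hgradm t)).norm)
      (Filter.Eventually.of_forall fun ω => ?_)
    simp only [Pi.add_apply]
    have h1 : ‖Gs t ω - gradient f (x t ω)‖ ≤ ‖Gs t ω‖ + ‖gradient f (x t ω)‖ :=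
      norm_sub_le _ _
    rw [Real.norm_eq_abs, abs_of_nonneg (by positivity)]
    nlinarith [norm_nonneg (Gs t ω), norm_nonneg (gradient f (x t ω)),
      norm_nonneg (Gs t ω - gradient f (x t ω)),
      sq_nonneg (‖Gs t ω‖ - ‖gradient f (x t ω)‖)]
  -- f(x t) integrable
  have hfx_int : ∀ t, Integrable (fun ω => f (x t ω)) Pr := by
    intro t
    refine Integrable.mono'
      ((((hxsq t).const_mul (2 * (‖gradient f x0‖ + L/2))).add
        (integrable_const (|fstar| + |f x0| +
          (‖gradient f x0‖ + L/2) * (1 + 2*‖x0‖^2)))))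
      (hfc.comp_aestronglyMeasurable (hxm t))
      (Filter.Eventually.of_forall fun ω => ?_)
    simp only [Pi.add_apply]
    set p := x t ω
    have hub : f p ≤ f x0 + ⟪gradient f x0, p - x0⟫ + L/2 * ‖p - x0‖^2 :=
      descent_lemma f L hL.le hdiff hlip x0 p
    have hlb : fstar ≤ f p := hfstar_le p
    have hip := abs_real_inner_le_norm (gradient f x0) (p - x0)
    have h3 : ‖p - x0‖ ≤ ‖p‖ + ‖x0‖ := norm_sub_le _ _
    have h4 : ‖p - x0‖^2 ≤ 2*‖p‖^2 + 2*‖x0‖^2 := by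
      nlinarith [norm_nonneg (p - x0), norm_nonneg p, norm_nonneg x0,
        sq_nonneg (‖p‖ - ‖x0‖)]
    have h5 : ‖p - x0‖ ≤ 1 + ‖p - x0‖^2 := by
      nlinarith [norm_nonneg (p - x0), sq_nonneg (‖p - x0‖ - 1)]
    rw [Real.norm_eq_abs, abs_le]
    constructor
    · have h8 : -(|fstar|) ≤ fstar := neg_abs_le fstar
      nlinarith [abs_nonneg fstar, abs_nonneg (f x0),
        mul_nonneg (by positivity : (0:ℝ) ≤ 2*(‖gradient f x0‖ + L/2)) (sq_nonneg ‖p‖),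
        mul_nonneg (by positivity : (0:ℝ) ≤ ‖gradient f x0‖ + L/2)
          (by positivity : (0:ℝ) ≤ 1 + 2*‖x0‖^2)]
    · have h6 : ⟪gradient f x0, p - x0⟫ ≤ ‖gradient f x0‖ * (1 + ‖p - x0‖^2) := by
        have := (le_abs_self ⟪gradient f x0, p - x0⟫).trans hip
        nlinarith [norm_nonneg (gradient f x0)]
      have h7 : f x0 ≤ |f x0| := le_abs_self _
      nlinarith [norm_nonneg (gradient f x0), hL.le, norm_nonneg p, sq_nonneg ‖p‖,
        abs_nonneg fstar]
  -- key identity: E⟨∇f(x_t), G_t⟩ = E‖∇f(x_t)‖²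
  have hcoord_le : ∀ (u : EuclideanSpace ℝ (Fin d)) (i : Fin d), |u i| ≤ ‖u‖ := by
    intro u i
    have h1 : ‖u‖ ^ 2 = ∑ j, u j * u j := by
      rw [← real_inner_self_eq_norm_sq]
      simp only [PiLp.inner_apply, RCLike.inner_apply, conj_trivial]
    have h2 : u i * u i ≤ ∑ j, u j * u j :=
      Finset.single_le_sum (fun j _ => mul_self_nonneg (u j)) (Finset.mem_univ i)
    nlinarith [abs_nonneg (u i), norm_nonneg u, sq_abs (u i)]
  have hkey : ∀ t, ∫ ω, ⟪gradient f (x t ω), Gs t ω⟫ ∂Pr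
      = ∫ ω, ‖gradient f (x t ω)‖ ^ 2 ∂Pr := by
    intro t
    set v : Ω₀ → EuclideanSpace ℝ (Fin d) := fun ω => gradient f (x t ω) with hv
    -- coordinate measurability and integrability
    have hvim : ∀ i : Fin d, StronglyMeasurable[ℱ t] (fun ω => v ω i) := by
      intro i
      exact ((EuclideanSpace.proj i).continuous.comp hgc).comp_stronglyMeasurable (hxmeas t)
    have hGim : ∀ i : Fin d, AEStronglyMeasurable (fun ω => Gs t ω i) Pr := by
      intro i
      exact (EuclideanSpace.proj i).continuous.comp_aestronglyMeasurable (hGm t)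
    have hprod_int : ∀ i : Fin d, Integrable (fun ω => v ω i * Gs t ω i) Pr := by
      intro i
      refine Integrable.mono' ((hgradsq t).add (hGsq t))
        ((((hvim i).mono (hle t)).aestronglyMeasurable).mul (hGim i))
        (Filter.Eventually.of_forall fun ω => ?_)
      simp only [Pi.add_apply]
      rw [Real.norm_eq_abs, abs_mul]
      have ha := hcoord_le (v ω) i
      have hb := hcoord_le (Gs t ω) i
      nlinarith [abs_nonneg (v ω i), abs_nonneg (Gs t ω i), norm_nonneg (v ω),
        norm_nonneg (Gs t ω), sq_nonneg (‖v ω‖ - ‖Gs t ω‖),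
        mul_le_mul ha hb (abs_nonneg _) (norm_nonneg _)]
    have hvsq_int : ∀ i : Fin d, Integrable (fun ω => v ω i * v ω i) Pr := by
      intro i
      refine Integrable.mono' (hgradsq t)
        ((((hvim i).mono (hle t)).aestronglyMeasurable).mul
          (((hvim i).mono (hle t)).aestronglyMeasurable))
        (Filter.Eventually.of_forall fun ω => ?_)
      rw [Real.norm_eq_abs, abs_mul]
      have ha := hcoord_le (v ω) i
      nlinarith [abs_nonneg (v ω i), norm_nonneg (v ω)]
    have hGi_int : ∀ i : Fin d, Integrable (fun ω => Gs t ω i) Pr := by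
      intro i
      exact (EuclideanSpace.proj (𝕜 := ℝ) i).integrable_comp (hGL1 t)
    -- coordinatewise conditional expectation
    have hcoord : ∀ i : Fin d, (Pr[fun ω => Gs t ω i|ℱ t]) =ᵐ[Pr] fun ω => v ω i := by
      intro i
      have h1 := condexp_clm_comm (μ := Pr) (hle t) (EuclideanSpace.proj (𝕜 := ℝ) i) (hGL1 t)
      refine h1.trans ?_
      filter_upwards [hunbiased t] with ω hω
      simp [hω, hv]
    -- per-coordinate identity
    have hci : ∀ i : Fin d, ∫ ω, v ω i * Gs t ω i ∂Pr = ∫ ω, v ω i * v ω i ∂Pr := by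
      intro i
      rw [← integral_condExp (hle t) (f := fun ω => v ω i * Gs t ω i)]
      refine integral_congr_ae ?_
      refine (condExp_mul_of_stronglyMeasurable_left (hvim i) (hprod_int i) (hGi_int i)).trans ?_
      filter_upwards [hcoord i] with ω hω
      simp only [Pi.mul_apply, hω]
    -- assemble
    have e1 : ∀ ω, ⟪v ω, Gs t ω⟫ = ∑ i, v ω i * Gs t ω i := by
      intro ω; simp [PiLp.inner_apply, RCLike.inner_apply]
      exact Finset.sum_congr rfl fun i _ => mul_comm _ _
    have e2 : ∀ ω, ‖v ω‖ ^ 2 = ∑ i, v ω i * v ω i := by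
      intro ω
      rw [← real_inner_self_eq_norm_sq]
      simp only [PiLp.inner_apply, RCLike.inner_apply, conj_trivial]
    calc ∫ ω, ⟪v ω, Gs t ω⟫ ∂Pr = ∫ ω, ∑ i, v ω i * Gs t ω i ∂Pr := by
          simp_rw [e1]
      _ = ∑ i, ∫ ω, v ω i * Gs t ω i ∂Pr :=
          integral_finset_sum _ (fun i _ => hprod_int i)
      _ = ∑ i, ∫ ω, v ω i * v ω i ∂Pr := by
          exact Finset.sum_congr rfl (fun i _ => hci i)
      _ = ∫ ω, ∑ i, v ω i * v ω i ∂Pr :=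
          (integral_finset_sum _ (fun i _ => hvsq_int i)).symm
      _ = ∫ ω, ‖v ω‖ ^ 2 ∂Pr := by simp_rw [e2]
  -- second moment bound
  have hI2 : ∀ t, ∫ ω, ‖Gs t ω‖ ^ 2 ∂Pr
      ≤ σ ^ 2 + ∫ ω, ‖gradient f (x t ω)‖ ^ 2 ∂Pr := by
    intro t
    set v : Ω₀ → EuclideanSpace ℝ (Fin d) := fun ω => gradient f (x t ω) with hv
    have e1 : ∀ ω, ‖Gs t ω‖ ^ 2
        = ‖Gs t ω - v ω‖ ^ 2 + 2 * ⟪v ω, Gs t ω⟫ - ‖v ω‖ ^ 2 := by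
      intro ω
      have h := norm_add_sq_real (v ω) (Gs t ω - v ω)
      rw [add_sub_cancel] at h
      rw [h, inner_sub_right, real_inner_self_eq_norm_sq]
      ring
    have hvar_int : ∫ ω, ‖Gs t ω - v ω‖ ^ 2 ∂Pr ≤ σ ^ 2 := by
      rw [← integral_condExp (hle t) (f := fun ω => ‖Gs t ω - v ω‖ ^ 2)]
      calc ∫ ω, (Pr[fun ω' => ‖Gs t ω' - v ω'‖ ^ 2|ℱ t]) ω ∂Pr
          ≤ ∫ _, σ ^ 2 ∂Pr :=
            integral_mono_ae integrable_condExp (integrable_const _) (hvar t)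
        _ = σ ^ 2 := by simp
    have hint : ∫ ω, ‖Gs t ω‖ ^ 2 ∂Pr
        = (∫ ω, ‖Gs t ω - v ω‖ ^ 2 ∂Pr) + 2 * (∫ ω, ⟪v ω, Gs t ω⟫ ∂Pr)
          - ∫ ω, ‖v ω‖ ^ 2 ∂Pr := by
      have hA := hdiffsq_int t
      have hB := (hinner_int t).const_mul 2
      have h1 : (fun ω => ‖Gs t ω‖ ^ 2) =ᵐ[Pr]
          fun ω => (‖Gs t ω - v ω‖ ^ 2 + 2 * ⟪v ω, Gs t ω⟫) - ‖v ω‖ ^ 2 := by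
        refine Filter.Eventually.of_forall fun ω => ?_
        dsimp only
        linarith [e1 ω]
      rw [integral_congr_ae h1,
        integral_sub (f := fun ω => ‖Gs t ω - v ω‖ ^ 2 + 2 * ⟪v ω, Gs t ω⟫)
          (g := fun ω => ‖v ω‖ ^ 2) (Integrable.add hA hB) (hgradsq t),
        integral_add (f := fun ω => ‖Gs t ω - v ω‖ ^ 2)
          (g := fun ω => 2 * ⟪v ω, Gs t ω⟫) hA hB, integral_const_mul]
    rw [hint, hkey t]
    linarith
  -- one-step inequality
  have hstep : ∀ t, ∫ ω, f (x (t+1) ω) ∂Pr ≤ (∫ ω, f (x t ω) ∂Pr)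
      - (η t - L * η t ^ 2 / 2) * ∫ ω, ‖gradient f (x t ω)‖ ^ 2 ∂Pr
      + L * η t ^ 2 / 2 * σ ^ 2 := by
    intro t
    have hptw : ∀ ω, f (x (t+1) ω) ≤ f (x t ω)
        - η t * ⟪gradient f (x t ω), Gs t ω⟫ + L / 2 * η t ^ 2 * ‖Gs t ω‖ ^ 2 := by
      intro ω
      have hd := descent_lemma f L hL.le hdiff hlip (x t ω) (x (t+1) ω)
      have hy : x (t+1) ω - x t ω = -(η t • Gs t ω) := by
        rw [hiter t ω]; abel
      rw [hy, inner_neg_right, real_inner_smul_right, norm_neg, norm_smul,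
        Real.norm_eq_abs, mul_pow, sq_abs] at hd
      linarith [hd]
    have hint1 : Integrable (fun ω => f (x t ω)
        - η t * ⟪gradient f (x t ω), Gs t ω⟫ + L / 2 * η t ^ 2 * ‖Gs t ω‖ ^ 2) Pr :=
      ((hfx_int t).sub ((hinner_int t).const_mul (η t))).add ((hGsq t).const_mul _)
    have h1 : ∫ ω, f (x (t+1) ω) ∂Pr ≤ ∫ ω, (f (x t ω)
        - η t * ⟪gradient f (x t ω), Gs t ω⟫ + L / 2 * η t ^ 2 * ‖Gs t ω‖ ^ 2) ∂Pr :=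
      integral_mono (hfx_int (t+1)) hint1 hptw
    have h2 : ∫ ω, (f (x t ω)
        - η t * ⟪gradient f (x t ω), Gs t ω⟫ + L / 2 * η t ^ 2 * ‖Gs t ω‖ ^ 2) ∂Pr
        = (∫ ω, f (x t ω) ∂Pr)
          - η t * (∫ ω, ⟪gradient f (x t ω), Gs t ω⟫ ∂Pr)
          + L / 2 * η t ^ 2 * ∫ ω, ‖Gs t ω‖ ^ 2 ∂Pr := by
      rw [integral_add (f := fun ω => f (x t ω)
            - η t * ⟪gradient f (x t ω), Gs t ω⟫)
          (g := fun ω => L / 2 * η t ^ 2 * ‖Gs t ω‖ ^ 2)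
          ((hfx_int t).sub ((hinner_int t).const_mul (η t))) ((hGsq t).const_mul _),
        integral_sub (f := fun ω => f (x t ω))
          (g := fun ω => η t * ⟪gradient f (x t ω), Gs t ω⟫)
          (hfx_int t) ((hinner_int t).const_mul (η t)),
        integral_const_mul, integral_const_mul]
    rw [h2, hkey t] at h1
    have h3 : 0 ≤ L / 2 * η t ^ 2 := by positivity
    have h4 := mul_le_mul_of_nonneg_left (hI2 t) h3
    nlinarith [h4]
  -- summed inequality (part 1)
  have main1 : (∑ t ∈ Finset.range T,
        (2 * η t - L * η t ^ 2) * ∫ ω, ‖gradient f (x t ω)‖ ^ 2 ∂Pr)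
      ≤ 2 * (f x0 - fstar) + L * σ ^ 2 * ∑ t ∈ Finset.range T, η t ^ 2 := by
    have htel : ∀ n, (∑ t ∈ Finset.range n,
        (η t - L * η t ^ 2 / 2) * ∫ ω, ‖gradient f (x t ω)‖ ^ 2 ∂Pr)
        ≤ (∫ ω, f (x 0 ω) ∂Pr) - (∫ ω, f (x n ω) ∂Pr)
          + ∑ t ∈ Finset.range n, L * η t ^ 2 / 2 * σ ^ 2 := by
      intro n
      induction n with
      | zero => simp
      | succ n ih =>
        rw [Finset.sum_range_succ, Finset.sum_range_succ]
        linarith [hstep n]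
    have hF0 : ∫ ω, f (x 0 ω) ∂Pr = f x0 := by
      simp only [hx0]
      simp
    have hFn : fstar ≤ ∫ ω, f (x T ω) ∂Pr := by
      have h := integral_mono (integrable_const fstar) (hfx_int T)
        (fun ω => hfstar_le (x T ω))
      simpa using h
    have h2 := htel T
    rw [hF0] at h2
    have e1 : (∑ t ∈ Finset.range T,
        (2 * η t - L * η t ^ 2) * ∫ ω, ‖gradient f (x t ω)‖ ^ 2 ∂Pr)
        = 2 * ∑ t ∈ Finset.range T,
          (η t - L * η t ^ 2 / 2) * ∫ ω, ‖gradient f (x t ω)‖ ^ 2 ∂Pr := by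
      rw [Finset.mul_sum]
      exact Finset.sum_congr rfl fun t _ => by ring
    have e2 : (∑ t ∈ Finset.range T, L * η t ^ 2 / 2 * σ ^ 2)
        = L * σ ^ 2 / 2 * ∑ t ∈ Finset.range T, η t ^ 2 := by
      rw [Finset.mul_sum]
      exact Finset.sum_congr rfl fun t _ => by ring
    rw [e2] at h2
    rw [e1]
    linarith
  refine ⟨main1, ?_⟩
  intro Tstar hTmeas hindep hdist
  set W := ∑ s ∈ Finset.range T, (2 * η s - L * η s ^ 2) with hWdef
  have hw_pos : ∀ t, 0 < 2 * η t - L * η t ^ 2 := by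
    intro t
    have h1 := (hη t).1
    have h2 : η t * L ≤ 1 := by
      rw [← le_div_iff₀ hL]; exact (hη t).2
    nlinarith
  have hW_pos : 0 < W := by
    rw [hWdef]
    exact Finset.sum_pos (fun t _ => hw_pos t) (Finset.nonempty_range_iff.2 hT.ne')
  have hp_nonneg : ∀ t, 0 ≤ (2 * η t - L * η t ^ 2) / W :=
    fun t => div_nonneg (hw_pos t).le hW_pos.le
  have hsets : ∀ t : ℕ, MeasurableSet {ω | Tstar ω = t} :=
    fun t => hTmeas (MeasurableSet.singleton t)
  -- a.e. Tstar < T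
  have hsum1 : ∑ t ∈ Finset.range T, Pr {ω | Tstar ω = t} = 1 := by
    have : ∀ t ∈ Finset.range T, Pr {ω | Tstar ω = t}
        = ENNReal.ofReal ((2 * η t - L * η t ^ 2) / W) := by
      intro t ht
      rw [hdist t, if_pos (Finset.mem_range.1 ht)]
    rw [Finset.sum_congr rfl this, ← ENNReal.ofReal_sum_of_nonneg
      (fun t _ => hp_nonneg t)]
    rw [← Finset.sum_div]
    rw [← hWdef, div_self hW_pos.ne']
    simp
  have hae : ∀ᵐ ω ∂Pr, Tstar ω < T := by
    have hd : (↑(Finset.range T) : Set ℕ).PairwiseDisjoint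
        (fun t => {ω | Tstar ω = t}) := by
      intro a _ b _ hab
      refine Set.disjoint_left.2 fun ω ha hb => hab ?_
      rw [← ha, ← hb]
    have hU : Pr (⋃ t ∈ Finset.range T, {ω | Tstar ω = t}) = 1 := by
      rw [measure_biUnion_finset hd (fun t _ => hsets t), hsum1]
    have hsub : (⋃ t ∈ Finset.range T, {ω | Tstar ω = t}) ⊆ {ω | Tstar ω < T} := by
      intro ω hω
      simp only [Set.mem_iUnion, Finset.mem_range] at hω
      obtain ⟨t, ht, hω⟩ := hω
      simp only [Set.mem_setOf_eq] at hω ⊢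
      omega
    have h1 : Pr {ω | Tstar ω < T} = 1 := by
      refine le_antisymm prob_le_one ?_
      rw [← hU]
      exact measure_mono hsub
    have hmeas : MeasurableSet {ω | Tstar ω < T} := hTmeas measurableSet_Iio
    rw [ae_iff]
    have : {ω | ¬ Tstar ω < T} = {ω | Tstar ω < T}ᶜ := rfl
    rw [this, measure_compl hmeas (measure_ne_top Pr _), h1, measure_univ]
    simp
  -- product identity per index
  have hprod : ∀ t, ∫ ω, (if Tstar ω = t then (1:ℝ) else 0)
      * ‖gradient f (x t ω)‖ ^ 2 ∂Pr
      = (Pr {ω | Tstar ω = t}).toReal * ∫ ω, ‖gradient f (x t ω)‖ ^ 2 ∂Pr := by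
    intro t
    have hχmeas : Measurable (fun n : ℕ => if n = t then (1:ℝ) else 0) :=
      measurable_from_top
    have hψmeas : Measurable (fun g : ℕ → EuclideanSpace ℝ (Fin d) =>
        ‖gradient f (g t)‖ ^ 2) := by
      have : Continuous (fun p : EuclideanSpace ℝ (Fin d) => ‖gradient f p‖ ^ 2) :=
        (continuous_pow 2).comp (continuous_norm.comp hgc)
      exact this.measurable.comp (measurable_pi_apply t)
    have hIF := hindep.comp hχmeas hψmeas
    have hχint : Integrable (fun ω => if Tstar ω = t then (1:ℝ) else 0) Pr := by
      refine Integrable.mono' (integrable_const (1:ℝ))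
        ((hχmeas.comp hTmeas).aestronglyMeasurable)
        (Filter.Eventually.of_forall fun ω => ?_)
      rw [Real.norm_eq_abs]
      split <;> simp
    have hmul := hIF.integral_mul_eq_mul_integral hχint.aestronglyMeasurable (hgradsq t).aestronglyMeasurable
    have hχint_eq : ∫ ω, (if Tstar ω = t then (1:ℝ) else 0) ∂Pr
        = (Pr {ω | Tstar ω = t}).toReal := by
      have he : (fun ω => if Tstar ω = t then (1:ℝ) else 0)
          = Set.indicator {ω | Tstar ω = t} (fun _ => (1:ℝ)) := by
        funext ω
        rw [Set.indicator_apply]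
        rfl
      rw [he]
      exact integral_indicator_one (hsets t)
    calc ∫ ω, (if Tstar ω = t then (1:ℝ) else 0) * ‖gradient f (x t ω)‖ ^ 2 ∂Pr
        = (∫ ω, (if Tstar ω = t then (1:ℝ) else 0) ∂Pr)
          * ∫ ω, ‖gradient f (x t ω)‖ ^ 2 ∂Pr := hmul
      _ = (Pr {ω | Tstar ω = t}).toReal * ∫ ω, ‖gradient f (x t ω)‖ ^ 2 ∂Pr := by
          rw [hχint_eq]
  -- rewrite the target integral
  have hterm_int : ∀ t, Integrable (fun ω => (if Tstar ω = t then (1:ℝ) else 0)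
      * ‖gradient f (x t ω)‖ ^ 2) Pr := by
    intro t
    refine Integrable.bdd_mul (hgradsq t)
      (((measurable_from_top (f := fun n : ℕ => if n = t then (1:ℝ) else 0)).comp
        hTmeas).aestronglyMeasurable) (c := 1) (Filter.Eventually.of_forall fun ω => ?_)
    rw [Real.norm_eq_abs]
    split <;> simp
  have hg_eq : (fun ω => ‖gradient f (x (Tstar ω) ω)‖ ^ 2) =ᵐ[Pr]
      (fun ω => ∑ t ∈ Finset.range T,
        (if Tstar ω = t then (1:ℝ) else 0) * ‖gradient f (x t ω)‖ ^ 2) := by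
    filter_upwards [hae] with ω hω
    have : ∀ t ∈ Finset.range T, (if Tstar ω = t then (1:ℝ) else 0)
        * ‖gradient f (x t ω)‖ ^ 2
        = if Tstar ω = t then ‖gradient f (x t ω)‖ ^ 2 else 0 := by
      intro t _
      split <;> simp
    rw [Finset.sum_congr rfl this, Finset.sum_ite_eq,
      if_pos (Finset.mem_range.2 hω)]
  have hint_eq : ∫ ω, ‖gradient f (x (Tstar ω) ω)‖ ^ 2 ∂Pr
      = ∑ t ∈ Finset.range T, ((2 * η t - L * η t ^ 2) / W)
        * ∫ ω, ‖gradient f (x t ω)‖ ^ 2 ∂Pr := by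
    rw [integral_congr_ae hg_eq,
      integral_finset_sum _ (fun t _ => hterm_int t)]
    refine Finset.sum_congr rfl fun t ht => ?_
    rw [hprod t, hdist t, if_pos (Finset.mem_range.1 ht),
      ENNReal.toReal_ofReal (hp_nonneg t)]
  rw [hint_eq]
  have hfinal : ∑ t ∈ Finset.range T, ((2 * η t - L * η t ^ 2) / W)
      * ∫ ω, ‖gradient f (x t ω)‖ ^ 2 ∂Pr
      = (∑ t ∈ Finset.range T, (2 * η t - L * η t ^ 2)
        * ∫ ω, ‖gradient f (x t ω)‖ ^ 2 ∂Pr) / W := by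
    rw [Finset.sum_div]
    exact Finset.sum_congr rfl fun t _ => by ring
  rw [hfinal]
  exact (div_le_div_iff_of_pos_right hW_pos).2 main1
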